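/- arXiv:1802.10133 — 8 statements merged into one kernel-verified Lean document; each statement's English description precedes it below -/
import Mathlib

section
/- Each moment Mᵢ = L Dⁱ R (for i ≥ 0) is a symmetric m×m matrix, given L = [A₁₂, Γ₁₂] with A₁₂ᵀ = A₂₁, Γ₁₂ᵀ = Γ₂₁, A₂₂ and Γ₂₂ symmetric, D = [[0, I], [-A₂₂, -Γ₂₂]], R = [[A₂₂⁻¹A₂₁], [-Γ₂₁]]. -/
open Matrix

theorem stmt_5 {m n : ℕ} (A12 Γ12 : Matrix (Fin m) (Fin n) ℝ)
    (A21 Γ21 : Matrix (Fin n) (Fin m) ℝ) (A22 Γ22 : Matrix (Fin n) (Fin n) ℝ)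
    (hA22 : IsUnit A22.det) (hA22s : A22.IsSymm) (hΓ22s : Γ22.IsSymm)
    (hA : A12ᵀ = A21) (hΓ : Γ12ᵀ = Γ21) (i : ℕ) :
    (fromCols A12 Γ12 *
      (fromBlocks (0 : Matrix (Fin n) (Fin n) ℝ) 1 (-A22) (-Γ22)) ^ i *
      fromRows (A22⁻¹ * A21) (-Γ21)).IsSymm := by
  set D : Matrix (Fin n ⊕ Fin n) (Fin n ⊕ Fin n) ℝ :=
    fromBlocks (0 : Matrix (Fin n) (Fin n) ℝ) 1 (-A22) (-Γ22) with hD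
  set J : Matrix (Fin n ⊕ Fin n) (Fin n ⊕ Fin n) ℝ :=
    fromBlocks A22⁻¹ 0 0 (-1) with hJ
  have hJs : Jᵀ = J := by
    rw [hJ, fromBlocks_transpose, transpose_nonsing_inv, hA22s.eq]
    simp
  have hDJ : J * Dᵀ = D * J := by
    rw [hD, hJ, fromBlocks_transpose, fromBlocks_multiply, fromBlocks_multiply,
      transpose_neg, transpose_neg, hA22s.eq, hΓ22s.eq, transpose_one, transpose_zero]
    simp [Matrix.mul_nonsing_inv A22 hA22, Matrix.nonsing_inv_mul A22 hA22]
  have key : ∀ k : ℕ, J * (Dᵀ) ^ k = D ^ k * J := by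
    intro k
    induction k with
    | zero => simp
    | succ k ih =>
      rw [pow_succ, ← mul_assoc, ih, mul_assoc, hDJ, ← mul_assoc, ← pow_succ]
  have hR : fromRows (A22⁻¹ * A21) (-Γ21) = J * (fromCols A12 Γ12)ᵀ := by
    rw [transpose_fromCols, hA, hΓ, hJ, fromBlocks_mul_fromRows]
    simp
  have e : fromCols A12 Γ12 * D ^ i * (J * (fromCols A12 Γ12)ᵀ)
      = fromCols A12 Γ12 * (D ^ i * J) * (fromCols A12 Γ12)ᵀ := by
    simp only [Matrix.mul_assoc]
  rw [hR, Matrix.IsSymm, e, transpose_mul, transpose_mul, transpose_transpose,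
    transpose_mul, transpose_pow, hJs, ← key]
  simp only [Matrix.mul_assoc]
end

section
/- The moments Mᵢ = L Dⁱ R (with Γ = γI) satisfy the identity γM₂ + M₃ = 0. -/
open Matrix

theorem stmt_8 {m n : ℕ} (A12 : Matrix (Fin m) (Fin n) ℝ)
    (A21 : Matrix (Fin n) (Fin m) ℝ) (A22 : Matrix (Fin n) (Fin n) ℝ)
    (hA22 : IsUnit A22.det) (hA : A12ᵀ = A21) (γ : ℝ)
    (L : Matrix (Fin m) (Fin n ⊕ Fin n) ℝ)
    (D : Matrix (Fin n ⊕ Fin n) (Fin n ⊕ Fin n) ℝ)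
    (R : Matrix (Fin n ⊕ Fin n) (Fin m) ℝ)
    (hL : L = fromCols A12 (0 : Matrix (Fin m) (Fin n) ℝ))
    (hD : D = fromBlocks 0 1 (-A22) (-(γ • (1 : Matrix (Fin n) (Fin n) ℝ))))
    (hR : R = fromRows (A22⁻¹ * A21) (0 : Matrix (Fin n) (Fin m) ℝ)) :
    γ • (L * D ^ 2 * R) + L * D ^ 3 * R = 0 := by
  subst hL hD hR
  rw [pow_succ, pow_succ, pow_succ, pow_succ, pow_succ, pow_zero, one_mul]
  simp only [Matrix.fromBlocks_multiply, Matrix.fromCols_mul_fromBlocks,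
    Matrix.fromCols_mul_fromRows, Matrix.zero_mul, Matrix.mul_zero, Matrix.mul_one,
    Matrix.mul_neg, Matrix.neg_mul, zero_add, add_zero, neg_neg, neg_zero, Matrix.mul_smul,
    Matrix.smul_mul, Matrix.mul_assoc, Matrix.mul_nonsing_inv_cancel_left _ _ hA22, Matrix.one_mul, smul_zero, add_zero,
    neg_smul, one_smul, Matrix.neg_mul, smul_neg]
  abel
end

section
/- The moments Mᵢ = L Dⁱ R (with Γ = γI) satisfy the identity γ²M₃ + 2γM₄ + M₅ = 0. -/
open Matrix

theorem stmt_9 {m n : ℕ} (A12 : Matrix (Fin m) (Fin n) ℝ)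
    (A21 : Matrix (Fin n) (Fin m) ℝ) (A22 : Matrix (Fin n) (Fin n) ℝ)
    (hA22 : IsUnit A22.det) (hA : A12ᵀ = A21) (γ : ℝ)
    (L : Matrix (Fin m) (Fin n ⊕ Fin n) ℝ)
    (D : Matrix (Fin n ⊕ Fin n) (Fin n ⊕ Fin n) ℝ)
    (R : Matrix (Fin n ⊕ Fin n) (Fin m) ℝ)
    (hL : L = fromCols A12 (0 : Matrix (Fin m) (Fin n) ℝ))
    (hD : D = fromBlocks 0 1 (-A22) (-(γ • (1 : Matrix (Fin n) (Fin n) ℝ))))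
    (hR : R = fromRows (A22⁻¹ * A21) (0 : Matrix (Fin n) (Fin m) ℝ)) :
    γ ^ 2 • (L * D ^ 3 * R) + (2 * γ) • (L * D ^ 4 * R) + L * D ^ 5 * R = 0 := by
  subst hL hD hR
  have h : A22 * (A22⁻¹ * A21) = A21 := mul_nonsing_inv_cancel_left _ _ hA22
  simp only [pow_succ, pow_zero, one_mul, Matrix.mul_assoc,
    fromBlocks_mul_fromRows, fromCols_mul_fromRows, Matrix.mul_zero,
    Matrix.zero_mul, Matrix.one_mul, Matrix.neg_mul, Matrix.mul_neg,
    Matrix.mul_smul, Matrix.smul_mul, Matrix.mul_add, Matrix.add_mul,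
    Matrix.mul_one, zero_add, add_zero, neg_zero, smul_zero, neg_neg, h]
  module
end

section
/- The moments Mᵢ = L Dⁱ R (with Γ = γI) satisfy the identity γ³M₄ + 3γ²M₅ + 3γM₆ + M₇ = 0. -/
open Matrix

set_option maxRecDepth 40000

def oscStep {m n : ℕ} (A22 : Matrix (Fin n) (Fin n) ℝ) (γ : ℝ)
    (PQ : Matrix (Fin m) (Fin n) ℝ × Matrix (Fin m) (Fin n) ℝ) :
    Matrix (Fin m) (Fin n) ℝ × Matrix (Fin m) (Fin n) ℝ :=
  (-(PQ.2 * A22), PQ.1 - γ • PQ.2)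

theorem stmt_10 {m n : ℕ} (A12 : Matrix (Fin m) (Fin n) ℝ)
    (A21 : Matrix (Fin n) (Fin m) ℝ) (A22 : Matrix (Fin n) (Fin n) ℝ)
    (hA22 : IsUnit A22.det) (hA : A12ᵀ = A21) (γ : ℝ)
    (L : Matrix (Fin m) (Fin n ⊕ Fin n) ℝ)
    (D : Matrix (Fin n ⊕ Fin n) (Fin n ⊕ Fin n) ℝ)
    (R : Matrix (Fin n ⊕ Fin n) (Fin m) ℝ)
    (hL : L = fromCols A12 (0 : Matrix (Fin m) (Fin n) ℝ))
    (hD : D = fromBlocks 0 1 (-A22) (-(γ • (1 : Matrix (Fin n) (Fin n) ℝ))))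
    (hR : R = fromRows (A22⁻¹ * A21) (0 : Matrix (Fin n) (Fin m) ℝ)) :
    γ ^ 3 • (L * D ^ 4 * R) + (3 * γ ^ 2) • (L * D ^ 5 * R) +
      (3 * γ) • (L * D ^ 6 * R) + L * D ^ 7 * R = 0 := by
  subst hL hD hR
  set W := A22⁻¹ * A21 with hW
  set D := fromBlocks (0 : Matrix (Fin n) (Fin n) ℝ) 1 (-A22)
      (-(γ • (1 : Matrix (Fin n) (Fin n) ℝ))) with hD
  have key : ∀ PQ : Matrix (Fin m) (Fin n) ℝ × Matrix (Fin m) (Fin n) ℝ,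
      fromCols PQ.1 PQ.2 * D =
        fromCols (oscStep A22 γ PQ).1 (oscStep A22 γ PQ).2 := by
    intro PQ
    rw [hD, fromCols_mul_fromBlocks, oscStep]
    simp [Matrix.mul_smul, sub_eq_add_neg]
  have hiter : ∀ k : ℕ, fromCols A12 (0 : Matrix (Fin m) (Fin n) ℝ) * D ^ k =
      fromCols ((oscStep A22 γ)^[k] (A12, 0)).1 ((oscStep A22 γ)^[k] (A12, 0)).2 := by
    intro k
    induction k with
    | zero => simp
    | succ k ih =>
      rw [pow_succ, ← Matrix.mul_assoc, ih, key, Function.iterate_succ_apply']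
  rw [hiter 4, hiter 5, hiter 6, hiter 7, fromCols_mul_fromRows,
    fromCols_mul_fromRows, fromCols_mul_fromRows, fromCols_mul_fromRows]
  simp only [show (7:ℕ) = 6+1 from rfl, show (6:ℕ) = 5+1 from rfl,
    show (5:ℕ) = 4+1 from rfl, show (4:ℕ) = 3+1 from rfl, show (3:ℕ) = 2+1 from rfl,
    show (2:ℕ) = 1+1 from rfl,
    Function.iterate_succ_apply', Function.iterate_one, Function.iterate_zero_apply, oscStep]
  simp only [Matrix.sub_mul, Matrix.add_mul, Matrix.smul_mul, Matrix.neg_mul,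
    Matrix.zero_mul, Matrix.mul_zero, smul_neg, smul_sub, smul_smul, neg_sub,
    sub_neg_eq_add, neg_neg, smul_zero, neg_zero, sub_zero, zero_sub, add_zero, zero_add]
  module
end

section
/- For each i ≥ 2, the moment Mᵢ = L Dⁱ R can be written as a linear combination of the matrices A₁₂ A₂₂ᵏ A₂₁ for 0 ≤ k ≤ ⌊i/2⌋ - 1, i.e., there exist real coefficients c_{i,k} with Mᵢ = Σ_{k=0}^{⌊i/2⌋-1} c_{i,k} A₁₂ A₂₂ᵏ A₂₁. -/
open Matrix

private lemma pad_sum {n : ℕ} (A : Matrix (Fin n) (Fin n) ℝ) (c : ℕ → ℝ) {N M : ℕ} (h : N ≤ M) :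
    ∑ k ∈ Finset.range N, c k • A ^ k
      = ∑ k ∈ Finset.range M, (if k < N then c k else 0) • A ^ k := by
  rw [← Finset.sum_subset (Finset.range_subset_range.2 h)
    (fun k _ hk => by rw [if_neg (by simpa using hk), zero_smul])]
  exact Finset.sum_congr rfl fun k hk => by rw [if_pos (Finset.mem_range.1 hk)]

theorem stmt_11 {m n : ℕ} (A12 : Matrix (Fin m) (Fin n) ℝ)
    (A21 : Matrix (Fin n) (Fin m) ℝ) (A22 : Matrix (Fin n) (Fin n) ℝ)
    (hA22 : IsUnit A22.det) (hA : A12ᵀ = A21) (γ : ℝ)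
    (L : Matrix (Fin m) (Fin n ⊕ Fin n) ℝ)
    (D : Matrix (Fin n ⊕ Fin n) (Fin n ⊕ Fin n) ℝ)
    (R : Matrix (Fin n ⊕ Fin n) (Fin m) ℝ)
    (hL : L = fromCols A12 (0 : Matrix (Fin m) (Fin n) ℝ))
    (hD : D = fromBlocks 0 1 (-A22) (-(γ • (1 : Matrix (Fin n) (Fin n) ℝ))))
    (hR : R = fromRows (A22⁻¹ * A21) (0 : Matrix (Fin n) (Fin m) ℝ)) :
    ∀ i : ℕ, 2 ≤ i → ∃ c : ℕ → ℝ,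
      L * D ^ i * R = ∑ k ∈ Finset.range (i / 2), c k • (A12 * A22 ^ k * A21) := by
  have key : ∀ i : ℕ, 1 ≤ i → ∃ w x : ℕ → ℝ,
      L * D ^ i = fromCols
        (A12 * (∑ k ∈ Finset.range (i / 2), w k • A22 ^ k) * A22)
        (A12 * (∑ k ∈ Finset.range ((i + 1) / 2), x k • A22 ^ k)) := by
    intro i hi
    induction i, hi using Nat.le_induction with
    | base =>
      refine ⟨0, fun _ => 1, ?_⟩
      rw [pow_one, hL, hD, fromCols_mul_fromBlocks]
      simp
    | succ i hi ih =>
      obtain ⟨w, x, hwx⟩ := ih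
      refine ⟨fun k => -x k,
        fun k => (if k = 0 then 0 else w (k - 1)) + (-γ) * (if k < (i + 1) / 2 then x k else 0),
        ?_⟩
      rw [pow_succ, ← Matrix.mul_assoc, hwx, hD, fromCols_mul_fromBlocks]
      refine congrArg₂ (fun a b => fromCols a b) ?_ ?_
      · -- first column
        beta_reduce
        have e : (∑ k ∈ Finset.range ((i + 1) / 2), (-x k) • A22 ^ k)
            = -∑ k ∈ Finset.range ((i + 1) / 2), x k • A22 ^ k := by
          simp
        rw [e]
        simp [Matrix.mul_assoc]
      · -- second column
        beta_reduce
        rw [show ((i + 1 + 1) / 2) = i / 2 + 1 by omega]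
        have hsplit : (∑ k ∈ Finset.range (i / 2 + 1),
            ((if k = 0 then 0 else w (k - 1)) + (-γ) * (if k < (i + 1) / 2 then x k else 0))
              • A22 ^ k)
            = (∑ k ∈ Finset.range (i / 2), w k • A22 ^ k) * A22
              + (-γ) • ∑ k ∈ Finset.range ((i + 1) / 2), x k • A22 ^ k := by
          rw [Finset.sum_congr rfl (fun k _ => add_smul
            (if k = 0 then 0 else w (k - 1))
            ((-γ) * (if k < (i + 1) / 2 then x k else 0)) (A22 ^ k)),
            Finset.sum_add_distrib]
          congr 1
          · rw [Finset.sum_range_succ', Finset.sum_mul]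
            simp [pow_succ, smul_mul_assoc, Matrix.mul_assoc]
          · rw [pad_sum A22 x (show (i + 1) / 2 ≤ i / 2 + 1 by omega), Finset.smul_sum]
            exact Finset.sum_congr rfl fun k _ => (mul_smul _ _ _)
        rw [hsplit, Matrix.mul_add]
        congr 1
        · rw [Matrix.mul_one, Matrix.mul_assoc]
        · rw [Matrix.mul_smul, Matrix.mul_neg, Matrix.mul_smul, Matrix.mul_one, neg_smul]
  intro i hi
  obtain ⟨w, x, hwx⟩ := key i (by omega)
  refine ⟨w, ?_⟩
  rw [hwx, hR, fromCols_mul_fromRows, Matrix.mul_zero, add_zero,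
    Matrix.mul_assoc (A12 * ∑ k ∈ Finset.range (i / 2), w k • A22 ^ k) A22,
    ← Matrix.mul_assoc A22, Matrix.mul_nonsing_inv A22 hA22, Matrix.one_mul,
    Matrix.mul_assoc A12, Matrix.sum_mul, Matrix.mul_sum]
  refine Finset.sum_congr rfl fun k _ => ?_
  rw [Matrix.smul_mul, Matrix.mul_smul, Matrix.mul_assoc]
end

section
/- For the first-order Krylov projection V = R, W = D⁻ᵀLᵀ, one has M̂ := WᵀV = -M_∞ and D̂ := WᵀDV = M₀, where M₀ = LR and M_∞ = -LD⁻¹R; moreover both M̂ and D̂ are symmetric. -/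
open Matrix

theorem stmt_12 {m n : ℕ} (A12 : Matrix (Fin m) (Fin n) ℝ)
    (A21 : Matrix (Fin n) (Fin m) ℝ) (A22 : Matrix (Fin n) (Fin n) ℝ)
    (hA22 : IsUnit A22.det) (hA22s : A22.IsSymm) (hA : A12ᵀ = A21) (γ : ℝ)
    (L : Matrix (Fin m) (Fin n ⊕ Fin n) ℝ)
    (D : Matrix (Fin n ⊕ Fin n) (Fin n ⊕ Fin n) ℝ)
    (R V : Matrix (Fin n ⊕ Fin n) (Fin m) ℝ)
    (W : Matrix (Fin n ⊕ Fin n) (Fin m) ℝ)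
    (hL : L = fromCols A12 (0 : Matrix (Fin m) (Fin n) ℝ))
    (hD : D = fromBlocks 0 1 (-A22) (-(γ • (1 : Matrix (Fin n) (Fin n) ℝ))))
    (hDinv : IsUnit D.det)
    (hR : R = fromRows (A22⁻¹ * A21) (0 : Matrix (Fin n) (Fin m) ℝ))
    (hV : V = R) (hW : W = (Dᵀ)⁻¹ * Lᵀ) :
    Wᵀ * V = -(-(L * D⁻¹ * R)) ∧
    Wᵀ * D * V = L * R ∧
    (Wᵀ * V).IsSymm ∧ (Wᵀ * D * V).IsSymm := by
  have hWt : Wᵀ = L * D⁻¹ := by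
    rw [hW, transpose_mul, transpose_transpose, transpose_nonsing_inv,
      transpose_transpose]
  have hDi : D⁻¹ = fromBlocks (-(γ • A22⁻¹)) (-A22⁻¹) 1 0 := by
    apply inv_eq_right_inv
    rw [hD, fromBlocks_multiply]
    simp [Matrix.mul_smul, mul_nonsing_inv _ hA22, smul_smul]
  have hA22is : (A22⁻¹)ᵀ = A22⁻¹ := by
    rw [transpose_nonsing_inv, hA22s.eq]
  have h1 : Wᵀ * V = -(γ • (A12 * A22⁻¹ * (A22⁻¹ * A21))) := by
    rw [hWt, hV, hR, hDi, hL, Matrix.mul_assoc, fromBlocks_mul_fromRows,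
      fromCols_mul_fromRows]
    simp [Matrix.mul_smul, Matrix.smul_mul, Matrix.mul_assoc]
  have h2 : Wᵀ * D * V = A12 * (A22⁻¹ * A21) := by
    rw [hWt, Matrix.mul_assoc, Matrix.mul_assoc, ← Matrix.mul_assoc D⁻¹,
      nonsing_inv_mul _ hDinv, Matrix.one_mul, hV, hR, hL,
      fromCols_mul_fromRows]
    simp
  have hLR : L * R = A12 * (A22⁻¹ * A21) := by
    rw [hL, hR, fromCols_mul_fromRows]; simp
  refine ⟨by rw [neg_neg, hWt, hV], by rw [h2, hLR], ?_, ?_⟩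
  · rw [h1]
    unfold Matrix.IsSymm
    simp [transpose_mul, hA22is, ← hA, Matrix.mul_assoc]
  · rw [h2]
    unfold Matrix.IsSymm
    simp [transpose_mul, hA22is, ← hA, Matrix.mul_assoc]
end

section
/- Let Φ ∈ ℝ^{N×m} and Ψ ∈ ℝ^{N×(N−m)} have columns forming together an orthonormal basis of ℝ^N (so [Φ Ψ] is orthogonal). Let A ∈ ℝ^{N×N} be symmetric positive definite, and set A₂₂ = ΨᵀAΨ, A₂₁ = ΨᵀAΦ. Then A⁻¹Φ(ΦᵀA⁻¹Φ)⁻¹ = Φ − Ψ A₂₂⁻¹ A₂₁. -/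
open Matrix

theorem stmt_17 {N m k : ℕ} (Φ : Matrix (Fin N) (Fin m) ℝ)
    (Ψ : Matrix (Fin N) (Fin k) ℝ) (A : Matrix (Fin N) (Fin N) ℝ)
    (hΦ : Φᵀ * Φ = 1) (hΨ : Ψᵀ * Ψ = 1) (hΦΨ : Φᵀ * Ψ = 0)
    (hcomp : Φ * Φᵀ + Ψ * Ψᵀ = 1) (hA : A.PosDef) :
    A⁻¹ * Φ * (Φᵀ * A⁻¹ * Φ)⁻¹ = Φ - Ψ * (Ψᵀ * A * Ψ)⁻¹ * (Ψᵀ * A * Φ) := by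
  have hAdet : IsUnit A.det := isUnit_iff_ne_zero.mpr hA.det_pos.ne'
  have hAinv : A⁻¹ * A = 1 := Matrix.nonsing_inv_mul A hAdet
  -- C := Ψᵀ A Ψ is positive definite
  have hC : (Ψᵀ * A * Ψ).PosDef := by
    refine Matrix.posDef_iff_dotProduct_mulVec.mpr ⟨?_, ?_⟩
    · show (Ψᵀ * A * Ψ)ᴴ = _
      have hA1 : Aᵀ = A := hA.isHermitian
      simp [Matrix.conjTranspose_mul, Matrix.mul_assoc]
      rw [hA1]
    · intro x hx
      have hΨx : Ψ *ᵥ x ≠ 0 := by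
        intro h
        apply hx
        have : Ψᵀ *ᵥ (Ψ *ᵥ x) = x := by
          rw [Matrix.mulVec_mulVec, hΨ, Matrix.one_mulVec]
        rw [h, Matrix.mulVec_zero] at this
        exact this.symm
      have := (Matrix.posDef_iff_dotProduct_mulVec.mp hA).2 (x := Ψ *ᵥ x) hΨx
      convert this using 1
      rw [show (Ψᵀ * A * Ψ) *ᵥ x = Ψᵀ *ᵥ (A *ᵥ (Ψ *ᵥ x)) by
        simp [Matrix.mulVec_mulVec, Matrix.mul_assoc]]
      rw [Matrix.dotProduct_mulVec, Matrix.vecMul_transpose]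
      simp
  have hCdet : IsUnit (Ψᵀ * A * Ψ).det := isUnit_iff_ne_zero.mpr hC.det_pos.ne'
  have hCC : (Ψᵀ * A * Ψ) * (Ψᵀ * A * Ψ)⁻¹ = 1 := Matrix.mul_nonsing_inv _ hCdet
  set X : Matrix (Fin N) (Fin m) ℝ := Φ - Ψ * (Ψᵀ * A * Ψ)⁻¹ * (Ψᵀ * A * Φ) with hX
  set M : Matrix (Fin m) (Fin m) ℝ := Φᵀ * (A * X) with hM
  have h1 : Ψᵀ * (A * X) = 0 := by
    rw [hX, Matrix.mul_sub, Matrix.mul_sub]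
    have : Ψᵀ * (A * (Ψ * (Ψᵀ * A * Ψ)⁻¹ * (Ψᵀ * A * Φ)))
        = (Ψᵀ * A * Ψ) * (Ψᵀ * A * Ψ)⁻¹ * (Ψᵀ * A * Φ) := by
      simp only [Matrix.mul_assoc]
    rw [this, hCC, Matrix.one_mul, ← Matrix.mul_assoc, sub_self]
  have h2 : A * X = Φ * M := by
    calc A * X = (Φ * Φᵀ + Ψ * Ψᵀ) * (A * X) := by rw [hcomp, Matrix.one_mul]
    _ = Φ * (Φᵀ * (A * X)) + Ψ * (Ψᵀ * (A * X)) := by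
        rw [Matrix.add_mul]; simp only [Matrix.mul_assoc]
    _ = Φ * M := by rw [h1, Matrix.mul_zero, add_zero, hM]
  have h3 : Φᵀ * X = 1 := by
    rw [hX, Matrix.mul_sub, hΦ, show Φᵀ * (Ψ * (Ψᵀ * A * Ψ)⁻¹ * (Ψᵀ * A * Φ))
      = (Φᵀ * Ψ) * ((Ψᵀ * A * Ψ)⁻¹ * (Ψᵀ * A * Φ)) by simp only [Matrix.mul_assoc],
      hΦΨ, Matrix.zero_mul, sub_zero]
  have h4 : X = A⁻¹ * (Φ * M) := by
    rw [← h2, ← Matrix.mul_assoc, hAinv, Matrix.one_mul]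
  have h5 : (Φᵀ * A⁻¹ * Φ) * M = 1 := by
    rw [← h3, h4]; simp only [Matrix.mul_assoc]
  have h6 : (Φᵀ * A⁻¹ * Φ)⁻¹ = M := Matrix.inv_eq_right_inv h5
  rw [h6, h4, Matrix.mul_assoc]
end

section
/- Under the same orthogonality assumptions, A⁻¹Φ(ΦᵀA⁻¹Φ)⁻¹ΦᵀA⁻¹ = ΦΦᵀA⁻¹ − ΨA₂₂⁻¹Ψᵀ + (I − ΦΦᵀ)A⁻¹, where A₂₂ = ΨᵀAΨ. -/
open Matrix

lemma aux_posdef {N k : ℕ} {B : Matrix (Fin N) (Fin N) ℝ} (hB : B.PosDef)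
    (Ψ : Matrix (Fin N) (Fin k) ℝ) (hΨ : Ψᵀ * Ψ = 1) : (Ψᵀ * B * Ψ).PosDef := by
  rw [posDef_iff_dotProduct_mulVec]
  constructor
  · show _ = _
    rw [conjTranspose_mul, conjTranspose_mul, hB.isHermitian.eq,
      conjTranspose_eq_transpose_of_trivial, conjTranspose_eq_transpose_of_trivial,
      transpose_transpose, Matrix.mul_assoc]
  · intro x hx
    have hΨx : Ψ *ᵥ x ≠ 0 := by
      intro h
      apply hx
      have := congrArg (fun v => Ψᵀ *ᵥ v) h
      simpa [Matrix.mulVec_mulVec, hΨ] using this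
    have := hB.dotProduct_mulVec_pos hΨx
    have e : x ᵥ* (Ψᵀ * B * Ψ) = (Ψ *ᵥ x) ᵥ* (B * Ψ) := by
      rw [Matrix.mul_assoc, ← Matrix.vecMul_vecMul, Matrix.vecMul_transpose]
    simpa [Matrix.dotProduct_mulVec, e] using this

theorem stmt_18 {N m k : ℕ} (Φ : Matrix (Fin N) (Fin m) ℝ)
    (Ψ : Matrix (Fin N) (Fin k) ℝ) (A : Matrix (Fin N) (Fin N) ℝ)
    (hΦ : Φᵀ * Φ = 1) (hΨ : Ψᵀ * Ψ = 1) (hΦΨ : Φᵀ * Ψ = 0)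
    (hcomp : Φ * Φᵀ + Ψ * Ψᵀ = 1) (hA : A.PosDef) :
    A⁻¹ * Φ * (Φᵀ * A⁻¹ * Φ)⁻¹ * Φᵀ * A⁻¹ =
      Φ * Φᵀ * A⁻¹ - Ψ * (Ψᵀ * A * Ψ)⁻¹ * Ψᵀ + (1 - Φ * Φᵀ) * A⁻¹ := by
  have hAsym : Aᵀ = A := by
    rw [← conjTranspose_eq_transpose_of_trivial]; exact hA.isHermitian.eq
  have hAu : IsUnit A.det := hA.det_pos.ne'.isUnit
  have hA1 : A * A⁻¹ = 1 := Matrix.mul_nonsing_inv A hAu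
  have hA2 : A⁻¹ * A = 1 := Matrix.nonsing_inv_mul A hAu
  have hBsym : (A⁻¹)ᵀ = A⁻¹ := by rw [Matrix.transpose_nonsing_inv, hAsym]
  have hM := aux_posdef hA Ψ hΨ
  have hS := aux_posdef hA.inv Φ hΦ
  have hMu : IsUnit (Ψᵀ * A * Ψ).det := hM.det_pos.ne'.isUnit
  have hSu : IsUnit (Φᵀ * A⁻¹ * Φ).det := hS.det_pos.ne'.isUnit
  have hM1 : (Ψᵀ * A * Ψ) * (Ψᵀ * A * Ψ)⁻¹ = 1 := Matrix.mul_nonsing_inv _ hMu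
  have hM2 : (Ψᵀ * A * Ψ)⁻¹ * (Ψᵀ * A * Ψ) = 1 := Matrix.nonsing_inv_mul _ hMu
  have hS1 : (Φᵀ * A⁻¹ * Φ) * (Φᵀ * A⁻¹ * Φ)⁻¹ = 1 := Matrix.mul_nonsing_inv _ hSu
  have hS2 : (Φᵀ * A⁻¹ * Φ)⁻¹ * (Φᵀ * A⁻¹ * Φ) = 1 := Matrix.nonsing_inv_mul _ hSu
  have hMsym : (Ψᵀ * A * Ψ)ᵀ = Ψᵀ * A * Ψ := by
    rw [Matrix.transpose_mul, Matrix.transpose_mul, transpose_transpose, hAsym,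
      Matrix.mul_assoc]
  have hSsym : (Φᵀ * A⁻¹ * Φ)ᵀ = Φᵀ * A⁻¹ * Φ := by
    rw [Matrix.transpose_mul, Matrix.transpose_mul, transpose_transpose, hBsym,
      Matrix.mul_assoc]
  have hMisym : ((Ψᵀ * A * Ψ)⁻¹)ᵀ = (Ψᵀ * A * Ψ)⁻¹ := by
    rw [Matrix.transpose_nonsing_inv, hMsym]
  have hSisym : ((Φᵀ * A⁻¹ * Φ)⁻¹)ᵀ = (Φᵀ * A⁻¹ * Φ)⁻¹ := by
    rw [Matrix.transpose_nonsing_inv, hSsym]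
  set C : Matrix (Fin N) (Fin N) ℝ := A⁻¹ - Ψ * (Ψᵀ * A * Ψ)⁻¹ * Ψᵀ with hCdef
  set D : Matrix (Fin N) (Fin N) ℝ := A⁻¹ * Φ * (Φᵀ * A⁻¹ * Φ)⁻¹ * Φᵀ * A⁻¹ with hDdef
  have key : D = C := by
    set E : Matrix (Fin N) (Fin N) ℝ := C - D with hEdef
    have hCsym : Cᵀ = C := by
      rw [hCdef, Matrix.transpose_sub, hBsym, Matrix.transpose_mul, Matrix.transpose_mul,
        transpose_transpose, hMisym]
      simp only [Matrix.mul_assoc]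
    have hDsym : Dᵀ = D := by
      rw [hDdef]
      simp only [Matrix.transpose_mul, transpose_transpose, hBsym, hSisym]
      simp only [Matrix.mul_assoc]
    have hEsym : Eᵀ = E := by rw [hEdef, Matrix.transpose_sub, hCsym, hDsym]
    have hCAΨ : C * (A * Ψ) = 0 := by
      calc C * (A * Ψ)
          = A⁻¹ * A * Ψ - Ψ * ((Ψᵀ * A * Ψ)⁻¹ * (Ψᵀ * A * Ψ)) := by
            rw [hCdef, Matrix.sub_mul]; simp only [Matrix.mul_assoc]
        _ = 0 := by rw [hA2, hM2, Matrix.one_mul, Matrix.mul_one, sub_self]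
    have hDAΨ : D * (A * Ψ) = 0 := by
      calc D * (A * Ψ)
          = A⁻¹ * Φ * (Φᵀ * A⁻¹ * Φ)⁻¹ * (Φᵀ * (A⁻¹ * A * Ψ)) := by
            rw [hDdef]; simp only [Matrix.mul_assoc]
        _ = A⁻¹ * Φ * (Φᵀ * A⁻¹ * Φ)⁻¹ * (Φᵀ * Ψ) := by rw [hA2, Matrix.one_mul]
        _ = 0 := by rw [hΦΨ, Matrix.mul_zero]
    have hEAΨ : E * (A * Ψ) = 0 := by
      rw [hEdef, Matrix.sub_mul, hCAΨ, hDAΨ, sub_zero]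
    have hΦC : Φᵀ * C = Φᵀ * A⁻¹ := by
      calc Φᵀ * C = Φᵀ * A⁻¹ - Φᵀ * Ψ * ((Ψᵀ * A * Ψ)⁻¹ * Ψᵀ) := by
            rw [hCdef, Matrix.mul_sub]; simp only [Matrix.mul_assoc]
        _ = Φᵀ * A⁻¹ := by rw [hΦΨ, Matrix.zero_mul, sub_zero]
    have hΦD : Φᵀ * D = Φᵀ * A⁻¹ := by
      calc Φᵀ * D = (Φᵀ * A⁻¹ * Φ) * ((Φᵀ * A⁻¹ * Φ)⁻¹ * (Φᵀ * A⁻¹)) := by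
            rw [hDdef]; simp only [Matrix.mul_assoc]
        _ = (Φᵀ * A⁻¹ * Φ) * (Φᵀ * A⁻¹ * Φ)⁻¹ * (Φᵀ * A⁻¹) := by
            simp only [Matrix.mul_assoc]
        _ = Φᵀ * A⁻¹ := by rw [hS1, Matrix.one_mul]
    have hΦE : Φᵀ * E = 0 := by
      rw [hEdef, Matrix.mul_sub, hΦC, hΦD, sub_self]
    have hEΦ : E * Φ = 0 := by
      have := congrArg Matrix.transpose hΦE
      rwa [Matrix.transpose_mul, transpose_transpose, hEsym, Matrix.transpose_zero] at this
    have hE : E = (E * Ψ) * Ψᵀ := by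
      calc E = E * (Φ * Φᵀ + Ψ * Ψᵀ) := by rw [hcomp, Matrix.mul_one]
      _ = (E * Φ) * Φᵀ + (E * Ψ) * Ψᵀ := by
          rw [Matrix.mul_add, Matrix.mul_assoc, Matrix.mul_assoc,
            ← Matrix.mul_assoc E Φ Φᵀ, ← Matrix.mul_assoc E Ψ Ψᵀ]
      _ = (E * Ψ) * Ψᵀ := by rw [hEΦ, Matrix.zero_mul, zero_add]
    have hΨAE : Ψᵀ * (A * E) = 0 := by
      have := congrArg Matrix.transpose hEAΨ
      rw [Matrix.transpose_mul, Matrix.transpose_mul, hAsym, hEsym,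
        Matrix.transpose_zero] at this
      rw [Matrix.mul_assoc] at this
      exact this
    have hF : E * Ψ = Ψ * (Ψᵀ * (E * Ψ)) := by
      calc E * Ψ = (Φ * Φᵀ + Ψ * Ψᵀ) * (E * Ψ) := by rw [hcomp, Matrix.one_mul]
      _ = Φ * (Φᵀ * E * Ψ) + Ψ * (Ψᵀ * (E * Ψ)) := by
          rw [Matrix.add_mul]; simp only [Matrix.mul_assoc]
      _ = Ψ * (Ψᵀ * (E * Ψ)) := by
          rw [hΦE, Matrix.zero_mul, Matrix.mul_zero, zero_add]
    have hΨF : Ψᵀ * (E * Ψ) = 0 := by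
      have h12 : Ψᵀ * (A * (E * Ψ)) = 0 := by
        calc Ψᵀ * (A * (E * Ψ)) = Ψᵀ * (A * E) * Ψ := by simp only [Matrix.mul_assoc]
          _ = 0 := by rw [hΨAE, Matrix.zero_mul]
      have h13 : (Ψᵀ * A * Ψ) * (Ψᵀ * (E * Ψ)) = 0 := by
        calc (Ψᵀ * A * Ψ) * (Ψᵀ * (E * Ψ)) = Ψᵀ * (A * (Ψ * (Ψᵀ * (E * Ψ)))) := by
              simp only [Matrix.mul_assoc]
        _ = Ψᵀ * (A * (E * Ψ)) := by rw [← hF]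
        _ = 0 := h12
      calc Ψᵀ * (E * Ψ) = ((Ψᵀ * A * Ψ)⁻¹ * (Ψᵀ * A * Ψ)) * (Ψᵀ * (E * Ψ)) := by
            rw [hM2, Matrix.one_mul]
        _ = (Ψᵀ * A * Ψ)⁻¹ * ((Ψᵀ * A * Ψ) * (Ψᵀ * (E * Ψ))) := by
            rw [Matrix.mul_assoc]
        _ = 0 := by rw [h13, Matrix.mul_zero]
    have hE0 : E = 0 := by
      calc E = (E * Ψ) * Ψᵀ := hE
        _ = (Ψ * (Ψᵀ * (E * Ψ))) * Ψᵀ := congrArg (fun X => X * Ψᵀ) hF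
        _ = 0 := by rw [hΨF, Matrix.mul_zero, Matrix.zero_mul]
    have := sub_eq_zero.mp hE0
    exact this.symm
  rw [key, hCdef]
  rw [Matrix.sub_mul, Matrix.one_mul]
  abel
end
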